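/- Let b ≥ 0 and let m1, m0 : ℝ → ℝ satisfy the smoothness assumption with constant b on [0,1]. Let 0 ≤ p' < p ≤ 1 and set ΔY := ∫_{p'}^{p} (m1(v) − m0(v)) dv. Then ∫_0^1 (m1(v) − m0(v)) dv ≤ ΔY/(p − p') + (2b/3)·(p³ − p'³)/(p − p') − b·(p² − p'²)/(p − p') + b. -/

import Mathlib

/-- Upper bound on the ATE without misreporting under the smoothness assumption:
`ATE ≤ ΔY/(p - p') + (2b/3)(p³ - p'³)/(p - p') - b(p² - p'²)/(p - p') + b`. -/
theorem ate_upper_bound_no_misreporting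
    (b : ℝ) (hb : 0 ≤ b) (m1 m0 : ℝ → ℝ)
    (hm1 : ∀ v1 ∈ Set.Icc (0:ℝ) 1, ∀ v2 ∈ Set.Icc (0:ℝ) 1, |m1 v1 - m1 v2| ≤ b * |v1 - v2|)
    (hm0 : ∀ v1 ∈ Set.Icc (0:ℝ) 1, ∀ v2 ∈ Set.Icc (0:ℝ) 1, |m0 v1 - m0 v2| ≤ b * |v1 - v2|)
    (p' p : ℝ) (hp' : 0 ≤ p') (hpp : p' < p) (hp : p ≤ 1)
    (ΔY : ℝ) (hΔY : ΔY = ∫ v in p'..p, (m1 v - m0 v)) :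
    (∫ v in (0:ℝ)..1, (m1 v - m0 v)) ≤
      ΔY / (p - p') + (2 * b / 3) * (p ^ 3 - p' ^ 3) / (p - p')
        - b * (p ^ 2 - p' ^ 2) / (p - p') + b := by
  set D : ℝ → ℝ := fun v => m1 v - m0 v with hDdef
  have hD : ∀ u ∈ Set.Icc (0:ℝ) 1, ∀ v ∈ Set.Icc (0:ℝ) 1,
      |D v - D u| ≤ 2 * b * |v - u| := by
    intro u hu v hv
    have h1 := hm1 v hv u hu
    have h0 := hm0 v hv u hu
    have : |D v - D u| ≤ |m1 v - m1 u| + |m0 v - m0 u| := by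
      have : D v - D u = (m1 v - m1 u) - (m0 v - m0 u) := by simp [hDdef]; ring
      rw [this]; exact abs_sub _ _
    linarith
  -- continuity of D on [0,1]
  have hcont : ContinuousOn D (Set.Icc (0:ℝ) 1) := by
    have : LipschitzOnWith (Real.toNNReal (2*b)) D (Set.Icc (0:ℝ) 1) := by
      rw [lipschitzOnWith_iff_dist_le_mul]
      intro x hx y hy
      rw [Real.dist_eq, Real.dist_eq]
      have := hD y hy x hx
      rwa [Real.coe_toNNReal _ (by linarith : (0:ℝ) ≤ 2*b)]
    exact this.continuousOn
  have hint01 : IntervalIntegrable D MeasureTheory.volume 0 1 := by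
    apply ContinuousOn.intervalIntegrable
    rwa [Set.uIcc_of_le (by norm_num : (0:ℝ) ≤ 1)]
  set A : ℝ := ∫ v in (0:ℝ)..1, D v with hA
  -- step A: for u in [0,1], A ≤ D u + b*(2u² - 2u + 1)
  have stepA : ∀ u ∈ Set.Icc (0:ℝ) 1, A ≤ D u + b * (2*u^2 - 2*u + 1) := by
    intro u hu
    have habs : Continuous fun v : ℝ => D u + 2*b*|v - u| := by fun_prop
    have hintabs : IntervalIntegrable (fun v : ℝ => D u + 2*b*|v - u|)
        MeasureTheory.volume 0 1 := habs.intervalIntegrable _ _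
    have hle : A ≤ ∫ v in (0:ℝ)..1, (D u + 2*b*|v - u|) := by
      apply intervalIntegral.integral_mono_on (by norm_num) hint01 hintabs
      intro v hv
      have := hD u hu v hv
      have h2 := abs_le.mp this
      cases' abs_cases (D v - D u) with h h <;> linarith [h2.1, h2.2, le_abs_self (D v - D u), neg_abs_le (D v - D u)]
    have hI : (∫ v in (0:ℝ)..1, |v - u|) = u^2 - u + 1/2 := by
      have hsplit : (∫ v in (0:ℝ)..u, |v - u|) + (∫ v in u..(1:ℝ), |v - u|)
          = ∫ v in (0:ℝ)..1, |v - u| := by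
        apply intervalIntegral.integral_add_adjacent_intervals <;>
          exact (Continuous.intervalIntegrable (by fun_prop) _ _)
      have h1 : (∫ v in (0:ℝ)..u, |v - u|) = u^2/2 := by
        have : (∫ v in (0:ℝ)..u, |v - u|) = ∫ v in (0:ℝ)..u, (u - v) := by
          apply intervalIntegral.integral_congr
          intro v hv
          rw [Set.uIcc_of_le hu.1] at hv
          show |v - u| = u - v
          rw [abs_of_nonpos (by linarith [hv.2])]; ring
        rw [this]
        have : (∫ v in (0:ℝ)..u, (u - v)) = (∫ v in (0:ℝ)..u, (u:ℝ)) - ∫ v in (0:ℝ)..u, v := by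
          apply intervalIntegral.integral_sub <;>
            exact (Continuous.intervalIntegrable (by fun_prop) _ _)
        rw [this, intervalIntegral.integral_const, integral_id]
        simp; ring
      have h2 : (∫ v in u..(1:ℝ), |v - u|) = (1-u)^2/2 := by
        have : (∫ v in u..(1:ℝ), |v - u|) = ∫ v in u..(1:ℝ), (v - u) := by
          apply intervalIntegral.integral_congr
          intro v hv
          rw [Set.uIcc_of_le hu.2] at hv
          show |v - u| = v - u
          exact abs_of_nonneg (by linarith [hv.1])
        rw [this]
        have : (∫ v in u..(1:ℝ), (v - u)) = (∫ v in u..(1:ℝ), v) - ∫ v in u..(1:ℝ), (u:ℝ) := by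
          apply intervalIntegral.integral_sub <;>
            exact (Continuous.intervalIntegrable (by fun_prop) _ _)
        rw [this, intervalIntegral.integral_const, integral_id]
        simp; ring
      rw [← hsplit, h1, h2]; ring
    have hrhs : (∫ v in (0:ℝ)..1, (D u + 2*b*|v - u|)) = D u + b*(2*u^2 - 2*u + 1) := by
      have : (∫ v in (0:ℝ)..1, (D u + 2*b*|v - u|))
          = (∫ v in (0:ℝ)..1, (D u : ℝ)) + ∫ v in (0:ℝ)..1, 2*b*|v - u| := by
        apply intervalIntegral.integral_add <;>
          exact (Continuous.intervalIntegrable (by fun_prop) _ _)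
      rw [this, intervalIntegral.integral_const, intervalIntegral.integral_const_mul, hI]
      simp; ring
    linarith [hle, hrhs.symm.le, hrhs.le]
  -- step B: integrate over [p', p]
  have hsub : Set.Icc p' p ⊆ Set.Icc (0:ℝ) 1 :=
    Set.Icc_subset_Icc hp' hp
  have hcontD : ContinuousOn D (Set.Icc p' p) := hcont.mono hsub
  have hintD : IntervalIntegrable D MeasureTheory.volume p' p := by
    apply ContinuousOn.intervalIntegrable
    rwa [Set.uIcc_of_le hpp.le]
  have hmono : (∫ u in p'..p, A) ≤ ∫ u in p'..p, (D u + b * (2*u^2 - 2*u + 1)) := by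
    apply intervalIntegral.integral_mono_on hpp.le
      (intervalIntegrable_const) (hintD.add ((Continuous.intervalIntegrable (by fun_prop) _ _)))
    intro u hu
    exact stepA u (hsub hu)
  have hL : (∫ u in p'..p, A) = (p - p') * A := by
    rw [intervalIntegral.integral_const]; simp [mul_comm]
  have hR : (∫ u in p'..p, (D u + b * (2*u^2 - 2*u + 1)))
      = ΔY + b * (2*(p^3 - p'^3)/3 - (p^2 - p'^2) + (p - p')) := by
    have hsplit : (∫ u in p'..p, (D u + b * (2*u^2 - 2*u + 1)))
        = (∫ u in p'..p, D u) + ∫ u in p'..p, b * (2*u^2 - 2*u + 1) := by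
      apply intervalIntegral.integral_add hintD
        ((Continuous.intervalIntegrable (by fun_prop) _ _))
    rw [hsplit, hΔY]
    congr 1
    have : (∫ u in p'..p, b * (2*u^2 - 2*u + 1))
        = b * ∫ u in p'..p, (2*u^2 - 2*u + 1) := intervalIntegral.integral_const_mul _ _
    rw [this]
    congr 1
    have : (∫ u in p'..p, (2*u^2 - 2*u + 1)) = (2*p^3/3 - p^2 + p) - (2*p'^3/3 - p'^2 + p') := by
      have : ∀ x ∈ Set.uIcc p' p, HasDerivAt (fun u : ℝ => 2*u^3/3 - u^2 + u) (2*x^2 - 2*x + 1) x := by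
        intro x _
        have h : HasDerivAt (fun u : ℝ => 2*u^3/3 - u^2 + u)
            (2*(3*x^2)/3 - 2*x + 1) x := by
          apply HasDerivAt.add
          apply HasDerivAt.sub
          · exact (((hasDerivAt_pow 3 x)).const_mul 2).div_const 3
          · simpa using (hasDerivAt_pow 2 x)
          · exact hasDerivAt_id' x
        convert h using 1; ring
      rw [intervalIntegral.integral_eq_sub_of_hasDerivAt this
        (Continuous.intervalIntegrable (by fun_prop) _ _)]
    rw [this]; ring
  have hkey : (p - p') * A ≤ ΔY + b * (2*(p^3 - p'^3)/3 - (p^2 - p'^2) + (p - p')) := by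
    rw [← hL, ← hR]; exact hmono
  have hpos : 0 < p - p' := by linarith
  have hfin : A ≤ (ΔY + b * (2*(p^3 - p'^3)/3 - (p^2 - p'^2) + (p - p'))) / (p - p') := by
    rw [le_div_iff₀ hpos]
    linarith [hkey]
  calc A ≤ (ΔY + b * (2*(p^3 - p'^3)/3 - (p^2 - p'^2) + (p - p'))) / (p - p') := hfin
    _ = ΔY / (p - p') + (2 * b / 3) * (p ^ 3 - p' ^ 3) / (p - p')
        - b * (p ^ 2 - p' ^ 2) / (p - p') + b := by field_simp; ring
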